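/- Let f be β-smooth on ℝ^d, y ∈ ℝ^d, δ > 0, v uniform on S^{d-1}, m ∈ ℝ^d. Define Δ = f(y+δv) - f(y-δv) - 2δ⟨m, v⟩ and ĝ = m + (d/(2δ)) Δ v. Then E[‖ĝ - m‖²] ≤ 2d‖∇f(y) - m‖² + (d²/2) β² δ². -/

import Mathlib

open MeasureTheory
open scoped RealInnerProductSpace

lemma taylor_bound {E : Type*} [NormedAddCommGroup E] [InnerProductSpace ℝ E] [CompleteSpace E]
    (f : E → ℝ) (β : ℝ) (hf : Differentiable ℝ f)
    (hβ : ∀ x y, ‖gradient f x - gradient f y‖ ≤ β * ‖x - y‖) (x h : E) :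
    |f (x + h) - f x - ⟪gradient f x, h⟫| ≤ β / 2 * ‖h‖ ^ 2 := by
  have hcont : Continuous (gradient f) := by
    rcases le_or_gt β 0 with hb | hb
    · have : ∀ a b, gradient f a = gradient f b := by
        intro a b
        have := hβ a b
        have h2 : β * ‖a - b‖ ≤ 0 := mul_nonpos_of_nonpos_of_nonneg hb (norm_nonneg _)
        have := le_trans this h2
        rwa [norm_le_zero_iff, sub_eq_zero] at this
      have : gradient f = fun _ => gradient f x := funext fun a => this a x
      rw [this]; exact continuous_const
    · exact (LipschitzWith.of_dist_le_mul (K := β.toNNReal) (fun a b => by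
        simpa [dist_eq_norm, Real.coe_toNNReal β hb.le] using hβ a b)).continuous
      -- LipschitzWith β.toNNReal
  have hderiv : ∀ t : ℝ, HasDerivAt (fun t : ℝ => f (x + t • h))
      ⟪gradient f (x + t • h), h⟫ t := by
    intro t
    have h1 : HasDerivAt (fun t : ℝ => x + t • h) h t := by
      simpa using ((hasDerivAt_id t).smul_const h).const_add x
    have h2 := ((hf (x + t • h)).hasGradientAt.hasFDerivAt).comp_hasDerivAt t h1
    exact h2
  have hcont2 : Continuous (fun t : ℝ => ⟪gradient f (x + t • h), h⟫) := by
    exact (Continuous.inner (hcont.comp (continuous_const.add (continuous_id.smul continuous_const))) continuous_const)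
  have hFTC : ∫ t in (0:ℝ)..1, ⟪gradient f (x + t • h), h⟫ = f (x + h) - f x := by
    have := intervalIntegral.integral_eq_sub_of_hasDerivAt
      (f := fun t : ℝ => f (x + t • h)) (fun t _ => hderiv t)
      (hcont2.intervalIntegrable 0 1)
    simpa using this
  have key : f (x + h) - f x - ⟪gradient f x, h⟫
      = ∫ t in (0:ℝ)..1, ⟪gradient f (x + t • h) - gradient f x, h⟫ := by
    have hsub : (fun t : ℝ => ⟪gradient f (x + t • h) - gradient f x, h⟫)
        = fun t : ℝ => ⟪gradient f (x + t • h), h⟫ - ⟪gradient f x, h⟫ := by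
      funext t; rw [inner_sub_left]
    rw [hsub, intervalIntegral.integral_sub (hcont2.intervalIntegrable 0 1)
      intervalIntegrable_const, hFTC]
    simp
  rw [key]
  have hbound : ∀ t ∈ Set.Icc (0:ℝ) 1,
      |⟪gradient f (x + t • h) - gradient f x, h⟫| ≤ (β * ‖h‖ ^ 2) * t := by
    intro t ht
    calc |⟪gradient f (x + t • h) - gradient f x, h⟫|
        ≤ ‖gradient f (x + t • h) - gradient f x‖ * ‖h‖ := abs_real_inner_le_norm _ _
      _ ≤ (β * ‖x + t • h - x‖) * ‖h‖ :=
          mul_le_mul_of_nonneg_right (hβ _ _) (norm_nonneg _)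
      _ = (β * ‖h‖ ^ 2) * t := by
          have : ‖x + t • h - x‖ = t * ‖h‖ := by
            simp [norm_smul, abs_of_nonneg ht.1]
          rw [this]; ring
  have habs : |∫ t in (0:ℝ)..1, ⟪gradient f (x + t • h) - gradient f x, h⟫|
      ≤ ∫ t in (0:ℝ)..1, (β * ‖h‖ ^ 2) * t := by
    refine le_trans (intervalIntegral.abs_integral_le_integral_abs zero_le_one) ?_
    apply intervalIntegral.integral_mono_on zero_le_one
    · exact ((Continuous.inner ((hcont.comp (continuous_const.add
        (continuous_id.smul continuous_const))).sub continuous_const)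
        continuous_const).abs).intervalIntegrable 0 1
    · exact (continuous_const.mul continuous_id).intervalIntegrable 0 1
    · exact hbound
  calc |∫ t in (0:ℝ)..1, ⟪gradient f (x + t • h) - gradient f x, h⟫|
      ≤ ∫ t in (0:ℝ)..1, (β * ‖h‖ ^ 2) * t := habs
    _ = β / 2 * ‖h‖ ^ 2 := by
        rw [intervalIntegral.integral_const_mul, integral_id]; ring

variable {d : ℕ}

lemma ae_sphere (μ : Measure (EuclideanSpace ℝ (Fin d))) [IsProbabilityMeasure μ]
    (hsupp : μ (Metric.sphere (0 : EuclideanSpace ℝ (Fin d)) 1) = 1) :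
    ∀ᵐ v ∂μ, ‖v‖ = 1 := by
  have h1 : μ (Metric.sphere (0 : EuclideanSpace ℝ (Fin d)) 1)ᶜ = 0 := by
    rw [measure_compl (Metric.isClosed_sphere.measurableSet) (measure_ne_top _ _), hsupp,
      measure_univ, tsub_self]
  filter_upwards [measure_eq_zero_iff_ae_notMem.mp h1] with v hv
  have := Set.notMem_compl_iff.mp hv
  rwa [mem_sphere_zero_iff_norm] at this

lemma integ_inner_sq (μ : Measure (EuclideanSpace ℝ (Fin d))) [IsProbabilityMeasure μ]
    (hsupp : μ (Metric.sphere (0 : EuclideanSpace ℝ (Fin d)) 1) = 1)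
    (u : EuclideanSpace ℝ (Fin d)) :
    Integrable (fun v => ⟪u, v⟫ ^ 2) μ := by
  refine Integrable.mono' (integrable_const (‖u‖ ^ 2))
    ((Continuous.pow (continuous_const.inner continuous_id) 2).aestronglyMeasurable) ?_
  filter_upwards [ae_sphere μ hsupp] with v hv
  rw [Real.norm_eq_abs, abs_of_nonneg (sq_nonneg _)]
  have hab := abs_le.mp (abs_real_inner_le_norm u v)
  calc ⟪u, v⟫ ^ 2 ≤ (‖u‖ * ‖v‖) ^ 2 := sq_le_sq' hab.1 hab.2
    _ = ‖u‖ ^ 2 := by rw [hv]; ring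

lemma inner_sq_integral (hd : 0 < d)
    (μ : Measure (EuclideanSpace ℝ (Fin d))) [IsProbabilityMeasure μ]
    (hsupp : μ (Metric.sphere (0 : EuclideanSpace ℝ (Fin d)) 1) = 1)
    (hinv : ∀ e : EuclideanSpace ℝ (Fin d) ≃ₗᵢ[ℝ] EuclideanSpace ℝ (Fin d),
      Measure.map e μ = μ)
    (u : EuclideanSpace ℝ (Fin d)) :
    ∫ v, ⟪u, v⟫ ^ 2 ∂μ = ‖u‖ ^ 2 / d := by
  -- invariance
  have hmap : ∀ (e : EuclideanSpace ℝ (Fin d) ≃ₗᵢ[ℝ] EuclideanSpace ℝ (Fin d))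
      (w : EuclideanSpace ℝ (Fin d)),
      ∫ v, ⟪w, v⟫ ^ 2 ∂μ = ∫ v, ⟪e.symm w, v⟫ ^ 2 ∂μ := by
    intro e w
    conv_lhs => rw [← hinv e]
    rw [integral_map e.continuous.aemeasurable
      ((Continuous.pow (continuous_const.inner continuous_id) 2).aestronglyMeasurable)]
    congr 1; funext v
    have : ⟪w, e v⟫ = ⟪e.symm w, v⟫ := by
      conv_lhs => rw [← e.apply_symm_apply w]
      exact e.inner_map_map _ _
    rw [this]
  -- all unit vectors give the same value
  have hconst : ∀ w w' : EuclideanSpace ℝ (Fin d), ‖w‖ = ‖w'‖ →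
      ∫ v, ⟪w, v⟫ ^ 2 ∂μ = ∫ v, ⟪w', v⟫ ^ 2 ∂μ := by
    intro w w' hn
    have e := (Submodule.reflection (ℝ ∙ (w - w'))ᗮ)
    have h1 : Submodule.reflection (ℝ ∙ (w - w'))ᗮ w = w' := Submodule.reflection_sub hn
    have h2 : (Submodule.reflection (ℝ ∙ (w - w'))ᗮ).symm w = w' := by
      rw [Submodule.reflection_symm]; exact h1
    rw [hmap (Submodule.reflection (ℝ ∙ (w - w'))ᗮ) w, h2]
  -- sum over an orthonormal basis
  have hsum : ∑ i : Fin d, ∫ v, ⟪(EuclideanSpace.single i (1:ℝ)), v⟫ ^ 2 ∂μ = 1 := by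
    rw [← integral_finset_sum _ (fun i _ => integ_inner_sq μ hsupp _)]
    have : ∫ v, (∑ i : Fin d, ⟪(EuclideanSpace.single i (1:ℝ)), v⟫ ^ 2) ∂μ
        = ∫ v : EuclideanSpace ℝ (Fin d), (1:ℝ) ∂μ := by
      apply integral_congr_ae
      filter_upwards [ae_sphere μ hsupp] with v hv
      have : ∑ i : Fin d, ⟪(EuclideanSpace.single i (1:ℝ)), v⟫ ^ 2 = ‖v‖ ^ 2 := by
        rw [← real_inner_self_eq_norm_sq]
        rw [PiLp.inner_apply]
        congr 1; funext i
        rw [EuclideanSpace.inner_single_left]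
        simp [sq]
      rw [this, hv]; norm_num
    rw [this, integral_const]; simp
  -- value for a single unit vector
  rcases eq_or_ne u 0 with rfl | hu
  · have : (fun v : EuclideanSpace ℝ (Fin d) => ⟪(0 : EuclideanSpace ℝ (Fin d)), v⟫ ^ 2)
        = fun _ => (0:ℝ) := by funext v; simp
    rw [this, integral_zero]; simp
  · set e0 : EuclideanSpace ℝ (Fin d) := EuclideanSpace.single ⟨0, hd⟩ (1:ℝ) with he0
    have hne0 : ‖e0‖ = 1 := by simp [he0, EuclideanSpace.norm_single]
    have heach : ∀ i : Fin d, ∫ v, ⟪(EuclideanSpace.single i (1:ℝ)), v⟫ ^ 2 ∂μ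
        = ∫ v, ⟪e0, v⟫ ^ 2 ∂μ := by
      intro i
      exact hconst _ _ (by simp [he0, EuclideanSpace.norm_single])
    have he0val : ∫ v, ⟪e0, v⟫ ^ 2 ∂μ = 1 / d := by
      have : ∑ i : Fin d, ∫ v, ⟪(EuclideanSpace.single i (1:ℝ)), v⟫ ^ 2 ∂μ
          = d * ∫ v, ⟪e0, v⟫ ^ 2 ∂μ := by
        rw [Finset.sum_congr rfl (fun i _ => heach i)]
        simp [mul_comm]
      rw [this] at hsum
      have hdne : (d:ℝ) ≠ 0 := Nat.cast_ne_zero.mpr hd.ne'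
      rw [eq_div_iff hdne, mul_comm]
      exact hsum
    have hunit : ∫ v, ⟪(‖u‖⁻¹ • u), v⟫ ^ 2 ∂μ = 1 / d := by
      rw [hconst (‖u‖⁻¹ • u) e0 (by
        rw [norm_smul, hne0, norm_inv, norm_norm]
        field_simp [norm_ne_zero_iff.mpr hu])]
      exact he0val
    have : ∫ v, ⟪u, v⟫ ^ 2 ∂μ = ‖u‖ ^ 2 * ∫ v, ⟪(‖u‖⁻¹ • u), v⟫ ^ 2 ∂μ := by
      rw [← integral_const_mul]
      congr 1; funext v
      rw [real_inner_smul_left]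
      have hn : ‖u‖ ≠ 0 := norm_ne_zero_iff.mpr hu
      field_simp
    rw [this, hunit]
    field_simp


set_option maxHeartbeats 1000000 in
/-- For `f` `β`-smooth, `y ∈ ℝ^d`, `δ > 0`, `v` uniform on `S^{d-1}`,
and `m ∈ ℝ^d`, defining `Δ = f(y+δv) - f(y-δv) - 2δ⟨m,v⟩` and `ĝ = m + (d/(2δ)) Δ v`,
we have `E[‖ĝ - m‖²] ≤ 2d‖∇f(y) - m‖² + (d²/2) β² δ²`. -/
theorem second_moment_variance_reduced_estimator {d : ℕ} (hd : 0 < d)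
    (μ : Measure (EuclideanSpace ℝ (Fin d))) [IsProbabilityMeasure μ]
    (hsupp : μ (Metric.sphere (0 : EuclideanSpace ℝ (Fin d)) 1) = 1)
    (hinv : ∀ e : EuclideanSpace ℝ (Fin d) ≃ₗᵢ[ℝ] EuclideanSpace ℝ (Fin d),
      Measure.map e μ = μ)
    (f : EuclideanSpace ℝ (Fin d) → ℝ) (β δ : ℝ) (hδ : 0 < δ)
    (hf : Differentiable ℝ f)
    (hβ : ∀ x y, ‖gradient f x - gradient f y‖ ≤ β * ‖x - y‖)
    (y m : EuclideanSpace ℝ (Fin d)) :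
    ∫ v, ‖(m + (((d : ℝ) / (2 * δ)) *
        (f (y + δ • v) - f (y - δ • v) - 2 * δ * ⟪m, v⟫)) • v) - m‖ ^ 2 ∂μ
      ≤ 2 * d * ‖gradient f y - m‖ ^ 2 + ((d : ℝ) ^ 2 / 2) * β ^ 2 * δ ^ 2 := by
  set g := gradient f y with hg
  set u := g - m with hu
  set C : ℝ := (d : ℝ) ^ 2 / 2 * β ^ 2 * δ ^ 2 with hC
  set c : EuclideanSpace ℝ (Fin d) → ℝ := fun v => ((d : ℝ) / (2 * δ)) *
      (f (y + δ • v) - f (y - δ • v) - 2 * δ * ⟪m, v⟫) with hc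
  -- pointwise bound on the sphere
  have hpt : ∀ v : EuclideanSpace ℝ (Fin d), ‖v‖ = 1 →
      ‖(m + c v • v) - m‖ ^ 2 ≤ 2 * (d:ℝ)^2 * ⟪u, v⟫ ^ 2 + C := by
    intro v hv
    have hnorm : ‖(m + c v • v) - m‖ ^ 2 = (c v) ^ 2 := by
      rw [add_sub_cancel_left, norm_smul, Real.norm_eq_abs, hv, mul_one, sq_abs]
    rw [hnorm]
    have hA := taylor_bound f β hf hβ y (δ • v)
    have hB := taylor_bound f β hf hβ y ((-δ) • v)
    have hnδ : ‖δ • v‖ = δ := by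
      rw [norm_smul, Real.norm_eq_abs, abs_of_pos hδ, hv, mul_one]
    have hnδ' : ‖(-δ) • v‖ = δ := by
      rw [norm_smul, Real.norm_eq_abs, abs_neg, abs_of_pos hδ, hv, mul_one]
    rw [hnδ] at hA
    rw [hnδ'] at hB
    rw [real_inner_smul_right] at hA hB
    rw [show y + (-δ) • v = y - δ • v by rw [neg_smul, ← sub_eq_add_neg]] at hB
    set a : ℝ := f (y + δ • v) - f y - δ * ⟪g, v⟫ with ha
    set b : ℝ := f (y - δ • v) - f y + δ * ⟪g, v⟫ with hb
    have hB' : |b| ≤ β / 2 * δ ^ 2 := by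
      have : f (y - δ • v) - f y - -δ * ⟪g, v⟫ = b := by rw [hb]; ring
      rwa [this] at hB
    set t : ℝ := ⟪u, v⟫ with ht
    have htt : ⟪m, v⟫ = ⟪g, v⟫ - t := by rw [ht, hu, inner_sub_left]; ring
    have hcv : c v = ((d:ℝ) / (2 * δ)) * ((a - b) + 2 * δ * t) := by
      rw [hc]; simp only; rw [htt, ha, hb]; ring
    have ha1 := abs_le.mp hA
    have hb1 := abs_le.mp hB'
    have hx : |a - b| ≤ β * δ^2 := by
      calc |a - b| ≤ |a| + |b| := abs_sub _ _
        _ ≤ β * δ^2 := by linarith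
    have hxx := abs_le.mp hx
    have hx2 : (a - b)^2 ≤ (β * δ^2)^2 := sq_le_sq' hxx.1 hxx.2
    have key : ((a - b) + 2 * δ * t) ^ 2 ≤ 2 * β^2 * δ^4 + 8 * δ^2 * t^2 := by
      nlinarith [sq_nonneg (a - b - 2 * δ * t), hx2]
    have hδ2 : (0:ℝ) < δ ^ 2 := by positivity
    rw [hcv]
    have expand : (((d:ℝ) / (2 * δ)) * ((a - b) + 2 * δ * t)) ^ 2
        = (d:ℝ)^2 / (4 * δ^2) * ((a - b) + 2 * δ * t) ^ 2 := by
      rw [mul_pow, div_pow, div_mul_eq_mul_div, div_mul_eq_mul_div, div_eq_div_iff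
        (by positivity) (by positivity)]
      ring
    rw [expand, hC]
    have hfac : (0:ℝ) ≤ (d:ℝ)^2 / (4 * δ^2) := by positivity
    calc (d:ℝ)^2 / (4 * δ^2) * ((a - b) + 2 * δ * t) ^ 2
        ≤ (d:ℝ)^2 / (4 * δ^2) * (2 * β^2 * δ^4 + 8 * δ^2 * t^2) :=
          mul_le_mul_of_nonneg_left key hfac
      _ = 2 * (d:ℝ)^2 * t^2 + (d:ℝ)^2 / 2 * β^2 * δ^2 := by
          rw [div_mul_eq_mul_div, div_eq_iff (by positivity : (4:ℝ) * δ^2 ≠ 0)]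
          ring
  -- continuity / measurability
  have hfc := hf.continuous
  have hcc : Continuous c := by
    apply continuous_const.mul
    exact ((hfc.comp (continuous_const.add (continuous_id.const_smul δ))).sub
      (hfc.comp (continuous_const.sub (continuous_id.const_smul δ)))).sub
      (continuous_const.mul (continuous_const.inner continuous_id))
  have hLc : Continuous (fun v : EuclideanSpace ℝ (Fin d) => ‖(m + c v • v) - m‖ ^ 2) :=
    (((continuous_const.add (hcc.smul continuous_id)).sub continuous_const).norm).pow 2
  -- integrability
  have hRint : Integrable (fun v => 2 * (d:ℝ)^2 * ⟪u, v⟫ ^ 2 + C) μ :=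
    ((integ_inner_sq μ hsupp u).const_mul _).add (integrable_const _)
  have hLint : Integrable (fun v : EuclideanSpace ℝ (Fin d) => ‖(m + c v • v) - m‖ ^ 2) μ := by
    refine Integrable.mono' (integrable_const (2 * (d:ℝ)^2 * ‖u‖^2 + C))
      hLc.aestronglyMeasurable ?_
    filter_upwards [ae_sphere μ hsupp] with v hv
    rw [Real.norm_eq_abs, abs_of_nonneg (pow_nonneg (norm_nonneg _) 2)]
    refine (hpt v hv).trans ?_
    have hab := abs_le.mp (abs_real_inner_le_norm u v)
    have h2 : ⟪u, v⟫ ^ 2 ≤ ‖u‖ ^ 2 := by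
      calc ⟪u, v⟫ ^ 2 ≤ (‖u‖ * ‖v‖) ^ 2 := sq_le_sq' hab.1 hab.2
        _ = ‖u‖ ^ 2 := by rw [hv]; ring
    have h3 := mul_le_mul_of_nonneg_left h2 (by positivity : (0:ℝ) ≤ 2 * (d:ℝ)^2)
    linarith
  -- put it together
  have hmono : ∫ v, ‖(m + c v • v) - m‖ ^ 2 ∂μ
      ≤ ∫ v, (2 * (d:ℝ)^2 * ⟪u, v⟫ ^ 2 + C) ∂μ := by
    refine integral_mono_ae hLint hRint ?_
    filter_upwards [ae_sphere μ hsupp] with v hv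
    exact hpt v hv
  have hRval : ∫ v, (2 * (d:ℝ)^2 * ⟪u, v⟫ ^ 2 + C) ∂μ
      = 2 * (d:ℝ) * ‖u‖ ^ 2 + C := by
    rw [integral_add ((integ_inner_sq μ hsupp u).const_mul _) (integrable_const _),
      integral_const_mul, inner_sq_integral hd μ hsupp hinv u, integral_const]
    simp only [probReal_univ, smul_eq_mul, one_mul]
    have hdne : (d:ℝ) ≠ 0 := Nat.cast_ne_zero.mpr hd.ne'
    field_simp
  calc ∫ v, ‖(m + c v • v) - m‖ ^ 2 ∂μ
      ≤ 2 * (d:ℝ) * ‖u‖ ^ 2 + C := hmono.trans (le_of_eq hRval)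
    _ = 2 * d * ‖gradient f y - m‖ ^ 2 + ((d : ℝ) ^ 2 / 2) * β ^ 2 * δ ^ 2 := by
        rw [hu, hg, hC]
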